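/- Let (G,μ) be a countable measured groupoid with a proper real conditionally negative definite function ψ (ν({ψ ≤ c}) < ∞ for all c > 0). Setting F_n = exp(−ψ/n), the sequence (F_n) consists of positive definite functions with F_n = 1 on units, F_n → 1 pointwise, and ν({|F_n| > ε}) < ∞ for every ε > 0 and every n. Hence (G,μ) has the Haagerup property. -/

import Mathlib

open MeasureTheory ENNReal Filter Topology
open scoped ComplexOrder

/-- A discrete (countable) groupoid, given algebraically: a type `E` of arrows over a
unit space `X`, with range `r`, source `s`, a (total) partial multiplication `mul`
(only constrained on composable pairs), inversion, and countable source fibres. -/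
structure CountableGroupoid where
  E : Type
  X : Type
  r : E → X
  s : E → X
  unit : X → E
  mul : E → E → E
  inv : E → E
  r_unit : ∀ x, r (unit x) = x
  s_unit : ∀ x, s (unit x) = x
  mul_assoc' : ∀ a b c, s a = r b → s b = r c → mul (mul a b) c = mul a (mul b c)
  r_mul : ∀ a b, s a = r b → r (mul a b) = r a
  s_mul : ∀ a b, s a = r b → s (mul a b) = s b
  unit_mul : ∀ a, mul (unit (r a)) a = a
  mul_unit : ∀ a, mul a (unit (s a)) = a
  r_inv : ∀ a, r (inv a) = s a
  s_inv : ∀ a, s (inv a) = r a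
  mul_inv : ∀ a, mul a (inv a) = unit (r a)
  inv_mul : ∀ a, mul (inv a) a = unit (s a)
  countable_fibers : ∀ x, {γ : E | s γ = x}.Countable

namespace CountableGroupoid

variable (G : CountableGroupoid)

/-- Sum of a nonnegative function over the source fibre `G_x = s⁻¹(x)`. -/
noncomputable def sFiberSum (f : G.E → ℝ≥0∞) (x : G.X) : ℝ≥0∞ :=
  ∑' γ : {γ : G.E // G.s γ = x}, f γ.1

/-- Sum of a nonnegative function over the range fibre `G^x = r⁻¹(x)`. -/
noncomputable def rFiberSum (f : G.E → ℝ≥0∞) (x : G.X) : ℝ≥0∞ :=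
  ∑' γ : {γ : G.E // G.r γ = x}, f γ.1

/-- The `I`-norm : `max (ess sup_x Σ_{r γ = x} |f γ|, ess sup_x Σ_{s γ = x} |f γ|)`. -/
noncomputable def Inorm [MeasurableSpace G.X] (μ : Measure G.X) (f : G.E → ℂ) : ℝ≥0∞ :=
  max (essSup (fun x => G.rFiberSum (fun γ => (‖f γ‖₊ : ℝ≥0∞)) x) μ)
      (essSup (fun x => G.sFiberSum (fun γ => (‖f γ‖₊ : ℝ≥0∞)) x) μ)

/-- The factorizations `γ = γ₁ γ₂` of an arrow `γ`. -/
def Factorizations (γ : G.E) : Type :=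
  {p : G.E × G.E // G.s p.1 = G.r p.2 ∧ G.mul p.1 p.2 = γ}

/-- Convolution product `(f*g)(γ) = Σ_{γ₁γ₂ = γ} f(γ₁) g(γ₂)`. -/
noncomputable def conv (f g : G.E → ℂ) (γ : G.E) : ℂ :=
  ∑' p : G.Factorizations γ, f p.1.1 * g p.1.2

/-- Involution `f^*(γ) = conj (f (γ⁻¹))`. -/
noncomputable def starF (f : G.E → ℂ) (γ : G.E) : ℂ := (starRingEnd ℂ) (f (G.inv γ))

/-- The measure `ν` on `G` induced by `μ`: `ν(A) = ∫_X #(A ∩ s⁻¹ x) dμ(x)`. -/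
noncomputable def nuSet [MeasurableSpace G.X] (μ : Measure G.X) (A : Set G.E) : ℝ≥0∞ :=
  ∫⁻ x, (∑' _γ : ↥(A ∩ {γ : G.E | G.s γ = x}), (1 : ℝ≥0∞)) ∂μ

/-- Positive definiteness of a function on a groupoid. -/
def IsPosDef (F : G.E → ℂ) : Prop :=
  ∀ (x : G.X) (n : ℕ) (γ : Fin n → G.E), (∀ i, G.r (γ i) = x) →
    ∀ lam : Fin n → ℂ,
      0 ≤ ∑ i, ∑ j, lam i * (starRingEnd ℂ) (lam j) * F (G.mul (G.inv (γ i)) (γ j))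

/-- Real conditionally negative definite functions on a groupoid. -/
def IsCondNegDef (ψ : G.E → ℝ) : Prop :=
  (∀ x, ψ (G.unit x) = 0) ∧ (∀ γ, ψ (G.inv γ) = ψ γ) ∧
  (∀ (x : G.X) (n : ℕ) (γ : Fin n → G.E), (∀ i, G.r (γ i) = x) →
    ∀ lam : Fin n → ℝ, (∑ i, lam i) = 0 →
      (∑ i, ∑ j, lam i * lam j * ψ (G.mul (G.inv (γ i)) (γ j))) ≤ 0)

/-- `Q^n` : products of `n` elements of `Q` (with `Q^0` the units). -/
def Qpow (Q : Set G.E) : ℕ → Set G.E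
  | 0 => Set.range G.unit
  | n+1 => {γ : G.E | ∃ a ∈ Q, ∃ b ∈ Qpow Q n, G.s a = G.r b ∧ γ = G.mul a b}

/-- A reduced composable chain of elements of `Q` (no backtracking). -/
def IsReducedChain (Q : Set G.E) : List G.E → Prop
  | [] => True
  | [a] => a ∈ Q
  | a :: b :: l => a ∈ Q ∧ G.s a = G.r b ∧ b ≠ G.inv a ∧ IsReducedChain Q (b :: l)

/-- A treeing: a symmetric generating set disjoint from the units such that each fibre
graph is a tree (no nontrivial reduced loops). -/
def IsTreeing (Q : Set G.E) : Prop :=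
  (∀ γ ∈ Q, G.inv γ ∈ Q) ∧
  (∀ x, G.unit x ∉ Q) ∧
  (∀ γ : G.E, ∃ n, γ ∈ G.Qpow Q n) ∧
  (∀ (a : G.E) (l : List G.E), G.IsReducedChain Q (a :: l) →
      List.foldl G.mul a l ≠ G.unit (G.r a))

/-- The length function `ψ(γ) = d_{r γ}(r γ, γ) = min {n | γ ∈ Q^n}`. -/
noncomputable def treeDist (Q : Set G.E) (γ : G.E) : ℝ :=
  ((sInf {n : ℕ | γ ∈ G.Qpow Q n} : ℕ) : ℝ)

/-- The `A = L^∞(X)`-valued inner product `⟨ξ,η⟩_A(x) = Σ_{s γ = x} conj (ξ γ) η γ`. -/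
noncomputable def innerA (ξ η : G.E → ℂ) (x : G.X) : ℂ :=
  ∑' γ : {γ : G.E // G.s γ = x}, (starRingEnd ℂ) (ξ γ.1) * η γ.1

/-- The Haagerup property for a countable measured groupoid. -/
def HaagerupProperty [MeasurableSpace G.X] (μ : Measure G.X) : Prop :=
  ∃ F : ℕ → G.E → ℂ,
    (∀ n, G.IsPosDef (F n)) ∧
    (∀ n, ∀ᵐ x ∂μ, F n (G.unit x) = 1) ∧
    (∀ n, ∀ ε : ℝ, 0 < ε → G.nuSet μ {γ : G.E | ε < ‖F n γ‖} < ⊤) ∧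
    G.nuSet μ {γ : G.E | ¬ Tendsto (fun n => F n γ) atTop (nhds (1 : ℂ))} = 0

end CountableGroupoid

/-- PSD kernel predicate. -/
def PSDk {n : ℕ} (K : Fin n → Fin n → ℝ) : Prop :=
  ∀ c : Fin n → ℝ, 0 ≤ ∑ i, ∑ j, c i * c j * K i j

theorem psdk_gram {n : ℕ} {K : Fin n → Fin n → ℝ} (hs : ∀ i j, K j i = K i j)
    (h : PSDk K) : ∃ B : Matrix (Fin n) (Fin n) ℝ, ∀ i j, K i j = ∑ k, B k i * B k j := by
  have hps : (Matrix.of K).PosSemidef := by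
    refine Matrix.PosSemidef.of_dotProduct_mulVec_nonneg ?_ ?_
    · ext i j
      simp [Matrix.conjTranspose, hs i j]
    · intro x
      have := h x
      simpa [dotProduct, Matrix.mulVec, mul_comm, mul_assoc, mul_left_comm,
        Finset.mul_sum] using this
  obtain ⟨B, hB⟩ : ∃ B : Matrix (Fin n) (Fin n) ℝ, Matrix.of K = B.conjTranspose * B := by
    open scoped MatrixOrder in
    exact ⟨CFC.sqrt (Matrix.of K), by
      rw [← Matrix.star_eq_conjTranspose,
        (CFC.sqrt_nonneg (Matrix.of K)).isSelfAdjoint.star_eq,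
        CFC.sqrt_mul_sqrt_self (Matrix.of K) hps.nonneg]⟩
  refine ⟨B, fun i j => ?_⟩
  have := congrArg (fun M => M i j) hB
  simpa [Matrix.mul_apply, Matrix.conjTranspose_apply] using this

theorem psdk_mul {n : ℕ} {K L : Fin n → Fin n → ℝ} (hKs : ∀ i j, K j i = K i j)
    (hK : PSDk K) (hLs : ∀ i j, L j i = L i j) (hL : PSDk L) :
    PSDk (fun i j => K i j * L i j) := by
  obtain ⟨B, hB⟩ := psdk_gram hKs hK
  obtain ⟨C, hC⟩ := psdk_gram hLs hL
  intro c
  have merge : ∀ f : Fin n → Fin n → ℝ, ∑ p : Fin n × Fin n, f p.1 p.2 = ∑ i, ∑ j, f i j :=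
    fun f => Fintype.sum_prod_type _
  have key : ∑ i, ∑ j, c i * c j * (K i j * L i j)
      = ∑ q : Fin n × Fin n, (∑ i, c i * B q.1 i * C q.2 i) ^ 2 := by
    calc ∑ i, ∑ j, c i * c j * (K i j * L i j)
        = ∑ p : Fin n × Fin n, ∑ q : Fin n × Fin n,
            (c p.1 * B q.1 p.1 * C q.2 p.1) * (c p.2 * B q.1 p.2 * C q.2 p.2) := by
          rw [← merge]
          refine Finset.sum_congr rfl fun p _ => ?_
          rw [hB, hC, Finset.sum_mul_sum, ← merge (fun k l => B k p.1 * B k p.2 * (C l p.1 * C l p.2))]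
          rw [Finset.mul_sum]
          refine Finset.sum_congr rfl fun q _ => ?_
          ring
      _ = ∑ q : Fin n × Fin n, ∑ p : Fin n × Fin n,
            (c p.1 * B q.1 p.1 * C q.2 p.1) * (c p.2 * B q.1 p.2 * C q.2 p.2) :=
          Finset.sum_comm
      _ = ∑ q : Fin n × Fin n, (∑ i, c i * B q.1 i * C q.2 i) ^ 2 := by
          refine Finset.sum_congr rfl fun q _ => ?_
          rw [sq, Finset.sum_mul_sum,
            ← merge (fun i j => (c i * B q.1 i * C q.2 i) * (c j * B q.1 j * C q.2 j))]
  rw [key]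
  exact Finset.sum_nonneg fun q _ => sq_nonneg _

theorem psdk_pow {n : ℕ} {K : Fin n → Fin n → ℝ} (hKs : ∀ i j, K j i = K i j)
    (hK : PSDk K) : ∀ m : ℕ, PSDk (fun i j => K i j ^ m)
  | 0 => by
      intro c
      simp only [pow_zero, mul_one]
      have : ∑ i, ∑ j, c i * c j = (∑ i, c i) ^ 2 := by
        rw [sq, Finset.sum_mul_sum]
      rw [this]; exact sq_nonneg _
  | m+1 => by
      have hs : ∀ i j, K j i ^ m = K i j ^ m := fun i j => by rw [hKs]
      have := psdk_mul hKs hK hs (psdk_pow hKs hK m)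
      intro c
      have h2 := this c
      simpa [pow_succ, mul_comm] using h2

theorem psdk_exp {n : ℕ} {K : Fin n → Fin n → ℝ} (hKs : ∀ i j, K j i = K i j)
    (hK : PSDk K) : PSDk (fun i j => Real.exp (K i j)) := by
  intro c
  have hsummable : ∀ i j : Fin n, Summable (fun m : ℕ => c i * c j * (K i j ^ m / m.factorial)) :=
    fun i j => (Real.summable_pow_div_factorial (K i j)).mul_left _
  have hexp : ∀ i j : Fin n, c i * c j * Real.exp (K i j)
      = ∑' m : ℕ, c i * c j * (K i j ^ m / m.factorial) := by
    intro i j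
    rw [Real.exp_eq_exp_ℝ, NormedSpace.exp_eq_tsum_div, ← tsum_mul_left]
  calc (0:ℝ) ≤ ∑' m : ℕ, ∑ i, ∑ j, c i * c j * (K i j ^ m / m.factorial) := by
        refine tsum_nonneg fun m => ?_
        have : ∑ i, ∑ j, c i * c j * (K i j ^ m / m.factorial)
            = (∑ i, ∑ j, c i * c j * K i j ^ m) / m.factorial := by
          rw [Finset.sum_div]
          refine Finset.sum_congr rfl fun i _ => ?_
          rw [Finset.sum_div]
          refine Finset.sum_congr rfl fun j _ => ?_
          ring
        rw [this]
        exact div_nonneg (psdk_pow hKs hK m c) (Nat.cast_nonneg _)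
    _ = ∑ i, ∑ j, c i * c j * Real.exp (K i j) := by
        have h1 : ∀ i : Fin n, Summable (fun m : ℕ => ∑ j, c i * c j * (K i j ^ m / m.factorial)) :=
          fun i => summable_sum (fun j _ => hsummable i j)
        rw [Summable.tsum_finsetSum (fun i _ => h1 i)]
        refine Finset.sum_congr rfl fun i _ => ?_
        rw [Summable.tsum_finsetSum (fun j _ => hsummable i j)]
        exact Finset.sum_congr rfl fun j _ => (hexp i j).symm

theorem psdk_smul {n : ℕ} {K : Fin n → Fin n → ℝ} {a : ℝ} (ha : 0 ≤ a) (hK : PSDk K) :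
    PSDk (fun i j => a * K i j) := by
  intro c
  have h := hK c
  have heq : ∑ i, ∑ j, c i * c j * (a * K i j) = a * ∑ i, ∑ j, c i * c j * K i j := by
    rw [Finset.mul_sum]
    refine Finset.sum_congr rfl fun i _ => ?_
    rw [Finset.mul_sum]
    exact Finset.sum_congr rfl fun j _ => by ring
  rw [heq]
  exact mul_nonneg ha h

theorem psdk_dconj {n : ℕ} {K : Fin n → Fin n → ℝ} (hK : PSDk K) (d : Fin n → ℝ) :
    PSDk (fun i j => d i * d j * K i j) := by
  intro c
  have h := hK (fun i => c i * d i)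
  have heq : ∑ i, ∑ j, (c i * d i) * (c j * d j) * K i j
      = ∑ i, ∑ j, c i * c j * (d i * d j * K i j) := by
    refine Finset.sum_congr rfl fun i _ => Finset.sum_congr rfl fun j _ => by ring
  rw [heq] at h
  exact h

open scoped ComplexOrder in
theorem psdk_complex {n : ℕ} {M : Fin n → Fin n → ℝ} (hs : ∀ i j, M j i = M i j)
    (h : PSDk M) (lam : Fin n → ℂ) :
    0 ≤ ∑ i, ∑ j, lam i * (starRingEnd ℂ) (lam j) * (M i j : ℂ) := by
  set S := ∑ i, ∑ j, lam i * (starRingEnd ℂ) (lam j) * (M i j : ℂ) with hS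
  have hconj : (starRingEnd ℂ) S = S := by
    rw [hS, map_sum]
    rw [Finset.sum_comm]
    refine Finset.sum_congr rfl fun j _ => ?_
    rw [map_sum]
    refine Finset.sum_congr rfl fun i _ => ?_
    simp only [map_mul, Complex.conj_conj, Complex.conj_ofReal]
    rw [hs i j]
    ring
  have him : S.im = 0 := by
    have := congrArg Complex.im hconj
    simp only [Complex.conj_im] at this
    linarith
  have hre : 0 ≤ S.re := by
    have hre_eq : S.re = (∑ i, ∑ j, (lam i).re * (lam j).re * M i j)
        + ∑ i, ∑ j, (lam i).im * (lam j).im * M i j := by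
      rw [hS, Complex.re_sum, ← Finset.sum_add_distrib]
      refine Finset.sum_congr rfl fun i _ => ?_
      rw [Complex.re_sum, ← Finset.sum_add_distrib]
      refine Finset.sum_congr rfl fun j _ => ?_
      simp [Complex.mul_re, Complex.mul_im, Complex.conj_re, Complex.conj_im,
        Complex.ofReal_re, Complex.ofReal_im]
      ring
    rw [hre_eq]
    exact add_nonneg (h fun i => (lam i).re) (h fun i => (lam i).im)
  rw [Complex.le_def]
  constructor
  · simpa using hre
  · simpa using him.symm

namespace CountableGroupoid
variable (G : CountableGroupoid)

theorem mul_left_cancel {c d d' : G.E} (hd : G.s c = G.r d) (hd' : G.s c = G.r d')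
    (h : G.mul c d = G.mul c d') : d = d' := by
  have h1 : G.mul (G.inv c) (G.mul c d) = d := by
    rw [← G.mul_assoc' _ _ _ (G.s_inv c) hd, G.inv_mul, hd, G.unit_mul]
  have h2 : G.mul (G.inv c) (G.mul c d') = d' := by
    rw [← G.mul_assoc' _ _ _ (G.s_inv c) hd', G.inv_mul, hd', G.unit_mul]
  rw [← h1, ← h2, h]

theorem inv_inv' (a : G.E) : G.inv (G.inv a) = a := by
  have h1 : G.mul (G.inv a) a = G.unit (G.s a) := G.inv_mul a
  have h2 : G.mul (G.inv a) (G.inv (G.inv a)) = G.unit (G.s a) := by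
    rw [G.mul_inv (G.inv a), G.r_inv]
  exact (G.mul_left_cancel (G.s_inv a) (by rw [G.r_inv]) (h1.trans h2.symm)).symm

theorem inv_unit (x : G.X) : G.inv (G.unit x) = G.unit x := by
  have h1 : G.mul (G.unit x) (G.inv (G.unit x)) = G.unit x := by
    rw [G.mul_inv, G.r_unit]
  have h2 := G.unit_mul (G.inv (G.unit x))
  rw [G.r_inv, G.s_unit] at h2
  rw [← h2, h1]

theorem inv_mul_rev {a b : G.E} (hab : G.s a = G.r b) :
    G.inv (G.mul a b) = G.mul (G.inv b) (G.inv a) := by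
  have hc : G.s (G.mul a b) = G.s b := G.s_mul a b hab
  have hr : G.r (G.mul a b) = G.r a := G.r_mul a b hab
  have hbi : G.s (G.inv b) = G.r (G.inv a) := by
    rw [G.s_inv, G.r_inv]; exact hab.symm
  have hrm : G.r (G.mul (G.inv b) (G.inv a)) = G.s b := by
    rw [G.r_mul _ _ hbi, G.r_inv]
  have key : G.mul (G.mul a b) (G.mul (G.inv b) (G.inv a)) = G.unit (G.r (G.mul a b)) := by
    rw [G.mul_assoc' a b _ hab (by rw [hrm]),
      ← G.mul_assoc' b (G.inv b) (G.inv a) (G.r_inv b).symm hbi,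
      G.mul_inv b, ← hab, ← G.r_inv a, G.unit_mul, G.mul_inv a, hr]
  have key2 : G.mul (G.mul a b) (G.inv (G.mul a b)) = G.unit (G.r (G.mul a b)) :=
    G.mul_inv _
  exact G.mul_left_cancel (G.r_inv _).symm (by rw [hc, hrm]) (key2.trans key.symm)

end CountableGroupoid

/-- a proper conditionally negative definite function `ψ` yields, via
`F_n = exp(−ψ/n)`, a sequence of positive definite functions equal to `1` on units,
with `ν({|F_n| > ε}) < ∞` and `F_n → 1` pointwise; hence `(G,μ)` has the Haagerup
property. -/
theorem proper_condNegDef_implies_haagerup (G : CountableGroupoid)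
    [MeasurableSpace G.X] (μ : Measure G.X) [IsProbabilityMeasure μ]
    (ψ : G.E → ℝ) (hψ : G.IsCondNegDef ψ)
    (hproper : ∀ c : ℝ, 0 < c → G.nuSet μ {γ : G.E | ψ γ ≤ c} < ⊤) :
    (∀ n : ℕ, G.IsPosDef fun γ => ((Real.exp (-(ψ γ) / ((n : ℝ) + 1)) : ℝ) : ℂ)) ∧
    (∀ (n : ℕ) (x : G.X), ((Real.exp (-(ψ (G.unit x)) / ((n : ℝ) + 1)) : ℝ) : ℂ) = 1) ∧
    (∀ (n : ℕ) (ε : ℝ), 0 < ε →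
      G.nuSet μ {γ : G.E | ε < ‖((Real.exp (-(ψ γ) / ((n : ℝ) + 1)) : ℝ) : ℂ)‖} < ⊤) ∧
    (∀ γ : G.E, Tendsto (fun n : ℕ => ((Real.exp (-(ψ γ) / ((n : ℝ) + 1)) : ℝ) : ℂ))
      atTop (nhds 1)) ∧
    G.HaagerupProperty μ := by
  have hunit : ∀ (n : ℕ) (x : G.X),
      ((Real.exp (-(ψ (G.unit x)) / ((n : ℝ) + 1)) : ℝ) : ℂ) = 1 := by
    intro n x
    simp [hψ.1 x]
  have htend : ∀ γ : G.E,
      Tendsto (fun n : ℕ => ((Real.exp (-(ψ γ) / ((n : ℝ) + 1)) : ℝ) : ℂ)) atTop (nhds 1) := by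
    intro γ
    have h1 : Tendsto (fun n : ℕ => ((n : ℝ) + 1)) atTop atTop :=
      tendsto_atTop_add_const_right _ 1 tendsto_natCast_atTop_atTop
    have h2 : Tendsto (fun n : ℕ => -(ψ γ) / ((n : ℝ) + 1)) atTop (nhds 0) :=
      Tendsto.div_atTop tendsto_const_nhds h1
    have h3 : Tendsto (fun n : ℕ => Real.exp (-(ψ γ) / ((n : ℝ) + 1))) atTop (nhds 1) := by
      have := (Real.continuous_exp.tendsto 0).comp h2
      simpa [Function.comp_def] using this
    have h4 := (Complex.continuous_ofReal.tendsto 1).comp h3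
    rw [show ((1:ℝ):ℂ) = 1 from Complex.ofReal_one] at h4
    exact h4
  have hfin : ∀ (n : ℕ) (ε : ℝ), 0 < ε →
      G.nuSet μ {γ : G.E | ε < ‖((Real.exp (-(ψ γ) / ((n : ℝ) + 1)) : ℝ) : ℂ)‖} < ⊤ := by
    intro n ε hε
    set t : ℝ := (n : ℝ) + 1 with htdef
    have ht : (0:ℝ) < t := by positivity
    set c : ℝ := max 1 (t * (-Real.log ε)) with hc
    have hcpos : (0:ℝ) < c := lt_of_lt_of_le one_pos (le_max_left _ _)
    have hsub : {γ : G.E | ε < ‖((Real.exp (-(ψ γ) / t) : ℝ) : ℂ)‖} ⊆ {γ : G.E | ψ γ ≤ c} := by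
      intro γ hγ
      simp only [Set.mem_setOf_eq] at hγ ⊢
      rw [Complex.norm_real, Real.norm_eq_abs, abs_of_pos (Real.exp_pos _)] at hγ
      have hlog : Real.log ε < -(ψ γ) / t := by
        calc Real.log ε < Real.log (Real.exp (-(ψ γ) / t)) := Real.log_lt_log hε hγ
          _ = -(ψ γ) / t := Real.log_exp _
      have h5 : ψ γ < t * (-Real.log ε) := by
        have h6 : Real.log ε * t < -(ψ γ) := (lt_div_iff₀ ht).mp hlog
        nlinarith
      exact le_trans h5.le (le_max_right _ _)
    have hmono : G.nuSet μ {γ : G.E | ε < ‖((Real.exp (-(ψ γ) / t) : ℝ) : ℂ)‖}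
        ≤ G.nuSet μ {γ : G.E | ψ γ ≤ c} := by
      unfold CountableGroupoid.nuSet
      refine lintegral_mono fun x => ?_
      have hts : ∀ S : Set G.E, ∑' (_γ : ↥S), (1:ℝ≥0∞) = ∑' γ : G.E, S.indicator 1 γ :=
        fun S => tsum_subtype S 1
      rw [hts, hts]
      refine ENNReal.tsum_le_tsum fun γ => ?_
      exact Set.indicator_le_indicator_of_subset
        (Set.inter_subset_inter_left _ hsub) (fun _ => zero_le) γ
    exact lt_of_le_of_lt hmono (hproper c hcpos)
  have hpos : ∀ n : ℕ, G.IsPosDef fun γ => ((Real.exp (-(ψ γ) / ((n : ℝ) + 1)) : ℝ) : ℂ) := by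
    intro n x m γ hγ lam
    simp only []
    set t : ℝ := (n : ℝ) + 1 with htdef
    have ht : (0:ℝ) < t := by positivity
    -- key pointwise identities
    have e1 : ψ (G.mul (G.inv (G.unit x)) (G.unit x)) = 0 := by
      rw [G.inv_mul]; exact hψ.1 _
    have e2 : ∀ j : Fin m, ψ (G.mul (G.inv (G.unit x)) (γ j)) = ψ (γ j) := by
      intro j
      rw [G.inv_unit, ← hγ j, G.unit_mul]
    have e3 : ∀ i : Fin m, ψ (G.mul (G.inv (γ i)) (G.unit x)) = ψ (γ i) := by
      intro i
      have hx : G.unit x = G.unit (G.s (G.inv (γ i))) := by rw [G.s_inv, hγ i]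
      rw [hx, G.mul_unit, hψ.2.1]
    have hcomp : ∀ i j : Fin m, G.s (G.inv (γ i)) = G.r (γ j) := fun i j => by
      rw [G.s_inv, hγ i, hγ j]
    have hAsymm : ∀ i j : Fin m,
        ψ (G.mul (G.inv (γ j)) (γ i)) = ψ (G.mul (G.inv (γ i)) (γ j)) := by
      intro i j
      have hrev : G.inv (G.mul (G.inv (γ i)) (γ j)) = G.mul (G.inv (γ j)) (γ i) := by
        rw [G.inv_mul_rev (hcomp i j), G.inv_inv']
      rw [← hrev, hψ.2.1]
    -- the kernel K i j = ψ(γ i) + ψ(γ j) - ψ(γ i⁻¹ γ j) is PSD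
    have hKpsd : PSDk (fun i j : Fin m =>
        ψ (γ i) + ψ (γ j) - ψ (G.mul (G.inv (γ i)) (γ j))) := by
      intro cc
      have hδr : ∀ i : Fin (m+1), G.r ((Fin.cons (G.unit x) γ : Fin (m+1) → G.E) i) = x := by
        intro i
        refine Fin.cases ?_ ?_ i
        · simp [G.r_unit]
        · intro i; simp [hγ i]
      have hsum0 : ∑ i, (Fin.cons (-(∑ k, cc k)) cc : Fin (m+1) → ℝ) i = 0 := by
        rw [Fin.sum_cons]; ring
      have hcnd := hψ.2.2 x (m+1) (Fin.cons (G.unit x) γ : Fin (m+1) → G.E) hδr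
        (Fin.cons (-(∑ k, cc k)) cc : Fin (m+1) → ℝ) hsum0
      simp only [Fin.sum_univ_succ, Fin.cons_zero, Fin.cons_succ, e1, e2, e3,
        mul_zero, zero_add] at hcnd
      have hA1 : ∑ y : Fin m, (-∑ k : Fin m, cc k) * cc y * ψ (γ y)
          = -((∑ k : Fin m, cc k) * (∑ k : Fin m, cc k * ψ (γ k))) := by
        calc ∑ y : Fin m, (-∑ k : Fin m, cc k) * cc y * ψ (γ y)
            = ∑ y : Fin m, (-∑ k : Fin m, cc k) * (cc y * ψ (γ y)) :=
              Finset.sum_congr rfl fun y _ => by ring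
          _ = (-∑ k : Fin m, cc k) * ∑ k : Fin m, cc k * ψ (γ k) :=
              (Finset.mul_sum _ _ _).symm
          _ = -((∑ k : Fin m, cc k) * (∑ k : Fin m, cc k * ψ (γ k))) := by ring
      have hA2 : ∑ y : Fin m, ((cc y * -∑ k : Fin m, cc k) * ψ (γ y)
            + ∑ z : Fin m, cc y * cc z * ψ (G.mul (G.inv (γ y)) (γ z)))
          = -((∑ k : Fin m, cc k) * (∑ k : Fin m, cc k * ψ (γ k)))
            + ∑ y : Fin m, ∑ z : Fin m, cc y * cc z * ψ (G.mul (G.inv (γ y)) (γ z)) := by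
        rw [Finset.sum_add_distrib]
        congr 1
        calc ∑ y : Fin m, (cc y * -∑ k : Fin m, cc k) * ψ (γ y)
            = ∑ y : Fin m, (-∑ k : Fin m, cc k) * (cc y * ψ (γ y)) :=
              Finset.sum_congr rfl fun y _ => by ring
          _ = (-∑ k : Fin m, cc k) * ∑ k : Fin m, cc k * ψ (γ k) :=
              (Finset.mul_sum _ _ _).symm
          _ = -((∑ k : Fin m, cc k) * (∑ k : Fin m, cc k * ψ (γ k))) := by ring
      rw [hA1, hA2] at hcnd
      have hineq : ∑ y : Fin m, ∑ z : Fin m, cc y * cc z * ψ (G.mul (G.inv (γ y)) (γ z))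
          ≤ 2 * ((∑ k : Fin m, cc k) * (∑ k : Fin m, cc k * ψ (γ k))) := by linarith
      have inner_eq : ∀ i : Fin m,
          ∑ j : Fin m, cc i * cc j * (ψ (γ i) + ψ (γ j) - ψ (G.mul (G.inv (γ i)) (γ j)))
          = (cc i * ψ (γ i)) * (∑ k : Fin m, cc k) + cc i * (∑ k : Fin m, cc k * ψ (γ k))
            - ∑ j : Fin m, cc i * cc j * ψ (G.mul (G.inv (γ i)) (γ j)) := by
        intro i
        calc ∑ j : Fin m, cc i * cc j * (ψ (γ i) + ψ (γ j) - ψ (G.mul (G.inv (γ i)) (γ j)))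
            = ∑ j : Fin m, ((cc i * ψ (γ i)) * cc j + cc i * (cc j * ψ (γ j))
                - cc i * cc j * ψ (G.mul (G.inv (γ i)) (γ j))) :=
              Finset.sum_congr rfl fun j _ => by ring
          _ = _ := by
              rw [Finset.sum_sub_distrib, Finset.sum_add_distrib, ← Finset.mul_sum,
                ← Finset.mul_sum]
      have hKsum : ∑ i : Fin m, ∑ j : Fin m,
            cc i * cc j * (ψ (γ i) + ψ (γ j) - ψ (G.mul (G.inv (γ i)) (γ j)))
          = (∑ k : Fin m, cc k * ψ (γ k)) * (∑ k : Fin m, cc k)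
            + (∑ k : Fin m, cc k) * (∑ k : Fin m, cc k * ψ (γ k))
            - ∑ y : Fin m, ∑ z : Fin m, cc y * cc z * ψ (G.mul (G.inv (γ y)) (γ z)) := by
        calc ∑ i : Fin m, ∑ j : Fin m,
              cc i * cc j * (ψ (γ i) + ψ (γ j) - ψ (G.mul (G.inv (γ i)) (γ j)))
            = ∑ i : Fin m, ((cc i * ψ (γ i)) * (∑ k : Fin m, cc k)
                + cc i * (∑ k : Fin m, cc k * ψ (γ k))
                - ∑ j : Fin m, cc i * cc j * ψ (G.mul (G.inv (γ i)) (γ j))) :=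
              Finset.sum_congr rfl fun i _ => inner_eq i
          _ = (∑ i : Fin m, (cc i * ψ (γ i)) * (∑ k : Fin m, cc k))
              + (∑ i : Fin m, cc i * (∑ k : Fin m, cc k * ψ (γ k)))
              - ∑ y : Fin m, ∑ z : Fin m, cc y * cc z * ψ (G.mul (G.inv (γ y)) (γ z)) := by
              rw [Finset.sum_sub_distrib, Finset.sum_add_distrib]
          _ = _ := by rw [← Finset.sum_mul, ← Finset.sum_mul]
      simp only []
      rw [hKsum]
      linarith
    -- assemble Schoenberg
    have hKsymm : ∀ i j : Fin m,
        (fun i j : Fin m => (1/t) * (ψ (γ i) + ψ (γ j) - ψ (G.mul (G.inv (γ i)) (γ j)))) j i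
        = (fun i j : Fin m => (1/t) * (ψ (γ i) + ψ (γ j) - ψ (G.mul (G.inv (γ i)) (γ j)))) i j := by
      intro i j
      dsimp only
      rw [hAsymm i j]
      ring
    have h1 : PSDk (fun i j : Fin m =>
        (1/t) * (ψ (γ i) + ψ (γ j) - ψ (G.mul (G.inv (γ i)) (γ j)))) :=
      psdk_smul (by positivity) hKpsd
    have h2 : PSDk (fun i j : Fin m =>
        Real.exp ((1/t) * (ψ (γ i) + ψ (γ j) - ψ (G.mul (G.inv (γ i)) (γ j))))) :=
      psdk_exp hKsymm h1
    have h3 : PSDk (fun i j : Fin m => Real.exp (-(ψ (γ i)) / t) * Real.exp (-(ψ (γ j)) / t)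
        * Real.exp ((1/t) * (ψ (γ i) + ψ (γ j) - ψ (G.mul (G.inv (γ i)) (γ j))))) :=
      psdk_dconj h2 (fun i => Real.exp (-(ψ (γ i)) / t))
    have h3s : ∀ i j : Fin m,
        (fun i j : Fin m => Real.exp (-(ψ (γ i)) / t) * Real.exp (-(ψ (γ j)) / t)
          * Real.exp ((1/t) * (ψ (γ i) + ψ (γ j) - ψ (G.mul (G.inv (γ i)) (γ j))))) j i
        = (fun i j : Fin m => Real.exp (-(ψ (γ i)) / t) * Real.exp (-(ψ (γ j)) / t)
          * Real.exp ((1/t) * (ψ (γ i) + ψ (γ j) - ψ (G.mul (G.inv (γ i)) (γ j))))) i j := by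
      intro i j
      dsimp only
      rw [hAsymm i j]
      ring
    have hfinal := psdk_complex h3s h3 lam
    have hterm : ∀ i j : Fin m, Real.exp (-(ψ (G.mul (G.inv (γ i)) (γ j))) / t)
        = Real.exp (-(ψ (γ i)) / t) * Real.exp (-(ψ (γ j)) / t)
          * Real.exp ((1/t) * (ψ (γ i) + ψ (γ j) - ψ (G.mul (G.inv (γ i)) (γ j)))) := by
      intro i j
      rw [← Real.exp_add, ← Real.exp_add]
      congr 1
      field_simp
      ring
    calc (0:ℂ) ≤ ∑ i, ∑ j, lam i * (starRingEnd ℂ) (lam j)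
          * (((fun i j : Fin m => Real.exp (-(ψ (γ i)) / t) * Real.exp (-(ψ (γ j)) / t)
            * Real.exp ((1/t) * (ψ (γ i) + ψ (γ j)
              - ψ (G.mul (G.inv (γ i)) (γ j))))) i j : ℝ) : ℂ) := hfinal
      _ = ∑ i, ∑ j, lam i * (starRingEnd ℂ) (lam j)
            * ((Real.exp (-(ψ (G.mul (G.inv (γ i)) (γ j))) / t) : ℝ) : ℂ) := by
          refine Finset.sum_congr rfl fun i _ => Finset.sum_congr rfl fun j _ => ?_
          rw [hterm i j]
  refine ⟨hpos, hunit, hfin, htend,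
    ⟨fun n γ => ((Real.exp (-(ψ γ) / ((n : ℝ) + 1)) : ℝ) : ℂ), hpos,
      fun n => Filter.Eventually.of_forall (hunit n), hfin, ?_⟩⟩
  have hempty : {γ : G.E | ¬ Tendsto
      (fun n : ℕ => ((Real.exp (-(ψ γ) / ((n : ℝ) + 1)) : ℝ) : ℂ)) atTop (nhds 1)} = ∅ :=
    Set.eq_empty_iff_forall_notMem.mpr fun γ hγ => hγ (htend γ)
  rw [hempty]
  simp [CountableGroupoid.nuSet]
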